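/- Suppose f : {0,1}^n → {0,1} has the property that f(x) is determined by the signs of k affine functionals: there exist affine maps ℓ₁,...,ℓ_k : ℝ^n → ℝ and a function G : {−1,0,1}^k → {0,1} with f(x) = G(sign(ℓ₁(x)),...,sign(ℓ_k(x))) for all x ∈ {0,1}^n. Then the average sensitivity of f is at most C·k·√n for some absolute constant C. -/

import Mathlib

open Finset

/-- Sensitivity of `f` at `x`. -/
def sens (n : ℕ) (f : (Fin n → Bool) → Bool) (x : Fin n → Bool) : ℕ :=
  (Finset.univ.filter fun i : Fin n => f (Function.update x i (!(x i))) ≠ f x).card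

/-- Average sensitivity of `f`. -/
noncomputable def avgSens (n : ℕ) (f : (Fin n → Bool) → Bool) : ℝ :=
  (∑ x : Fin n → Bool, (sens n f x : ℝ)) / 2 ^ n

private lemma sign_vals (a : ℝ) : Real.sign a = -1 ∨ Real.sign a = 0 ∨ Real.sign a = 1 := by
  rcases lt_trichotomy a 0 with h|h|h
  · exact Or.inl (Real.sign_of_neg h)
  · exact Or.inr (Or.inl (by simp [h]))
  · exact Or.inr (Or.inr (Real.sign_of_pos h))

private lemma sign_mono {a b : ℝ} (h : a ≤ b) : Real.sign a ≤ Real.sign b := by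
  unfold Real.sign
  split_ifs <;> norm_num <;> linarith

private lemma one_le_abs_sign_sub {a b : ℝ} (h : Real.sign a ≠ Real.sign b) :
    1 ≤ |Real.sign a - Real.sign b| := by
  rcases sign_vals a with ha|ha|ha <;> rcases sign_vals b with hb|hb|hb <;>
    rw [ha, hb] at h ⊢ <;> revert h <;> norm_num

private def flipP (n : ℕ) (i : Fin n) : Equiv.Perm (Fin n → Bool) :=
  Function.Involutive.toPerm (fun x => Function.update x i (!(x i))) (by
    intro x; funext j
    rcases eq_or_ne j i with rfl | hj
    · simp
    · simp [Function.update_of_ne hj])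

private lemma flipP_apply_self {n : ℕ} (i : Fin n) (x : Fin n → Bool) :
    flipP n i x i = !(x i) := by simp [flipP, Function.Involutive.toPerm]

private lemma flipP_apply_ne {n : ℕ} {i j : Fin n} (h : j ≠ i) (x : Fin n → Bool) :
    flipP n i x j = x j := by
  simp [flipP, Function.Involutive.toPerm, Function.update_of_ne h]

private lemma flipP_def {n : ℕ} (i : Fin n) (x : Fin n → Bool) :
    flipP n i x = Function.update x i (!(x i)) := rfl

private lemma flipP_flipP {n : ℕ} (i : Fin n) (x : Fin n → Bool) :
    flipP n i (flipP n i x) = x := by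
  funext j
  rcases eq_or_ne j i with rfl | hj
  · rw [flipP_apply_self, flipP_apply_self, Bool.not_not]
  · rw [flipP_apply_ne hj, flipP_apply_ne hj]

private lemma card_cube (n : ℕ) : (Fintype.card (Fin n → Bool) : ℝ) = 2 ^ n := by
  simp [Fintype.card_fun]

private lemma orth {n : ℕ} {i j : Fin n} (hij : i ≠ j) :
    ∑ x : Fin n → Bool, ((if x i then (1:ℝ) else -1) * (if x j then 1 else -1)) = 0 := by
  set F : (Fin n → Bool) → ℝ :=
    fun x => (if x i then (1:ℝ) else -1) * (if x j then 1 else -1) with hF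
  have key : ∑ x, F (flipP n i x) = ∑ x, F x := Equiv.sum_comp (flipP n i) F
  have h2 : ∀ x : Fin n → Bool, F (flipP n i x) = -(F x) := by
    intro x
    rw [hF]
    simp only [flipP_apply_self, flipP_apply_ne (Ne.symm hij)]
    cases x i <;> cases x j <;> norm_num
  rw [Finset.sum_congr rfl (fun x _ => h2 x), Finset.sum_neg_distrib] at key
  linarith

private lemma sum_e_sq {n : ℕ} (i : Fin n) :
    ∑ x : Fin n → Bool, ((if x i then (1:ℝ) else -1) * (if x i then 1 else -1)) = 2 ^ n := by
  have : ∀ x : Fin n → Bool,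
      ((if x i then (1:ℝ) else -1) * (if x i then 1 else -1)) = 1 := by
    intro x; cases x i <;> norm_num
  rw [Finset.sum_congr rfl (fun x _ => this x), Finset.sum_const, nsmul_eq_mul, mul_one,
    ← card_cube n, Finset.card_univ]

private lemma bessel {n : ℕ} (g : (Fin n → Bool) → ℝ) (hg : ∀ x, g x ^ 2 ≤ 1) :
    ∑ i : Fin n, (∑ x : Fin n → Bool, g x * (if x i then (1:ℝ) else -1)) ^ 2
      ≤ (2:ℝ) ^ n * 2 ^ n := by
  set e : Fin n → (Fin n → Bool) → ℝ := fun i x => if x i then (1:ℝ) else -1 with he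
  set a : Fin n → ℝ := fun i => ∑ x, g x * e i x with ha
  set b : (Fin n → Bool) → ℝ := fun x => ∑ i, a i * e i x with hb
  have h1 : ∑ i, a i ^ 2 = ∑ x, g x * b x := by
    have : ∀ i, a i ^ 2 = ∑ x, g x * e i x * a i := by
      intro i; rw [pow_two]; conv_lhs => rw [ha]
      rw [Finset.sum_mul]
    rw [Finset.sum_congr rfl (fun i _ => this i), Finset.sum_comm]
    refine Finset.sum_congr rfl (fun x _ => ?_)
    rw [hb, Finset.mul_sum]
    exact Finset.sum_congr rfl (fun i _ => by ring)
  have h2 : ∑ x, b x ^ 2 = 2 ^ n * ∑ i, a i ^ 2 := by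
    have hbx : ∀ x, b x ^ 2 = ∑ i, ∑ j, a i * a j * (e i x * e j x) := by
      intro x; rw [pow_two, hb, Finset.sum_mul_sum]
      exact Finset.sum_congr rfl fun i _ => Finset.sum_congr rfl fun j _ => by ring
    rw [Finset.sum_congr rfl (fun x _ => hbx x), Finset.sum_comm]
    have : ∀ i, ∑ x : Fin n → Bool, ∑ j, a i * a j * (e i x * e j x)
        = 2 ^ n * a i ^ 2 := by
      intro i
      rw [Finset.sum_comm]
      have inner : ∀ j, ∑ x : Fin n → Bool, a i * a j * (e i x * e j x)
          = a i * a j * ∑ x, e i x * e j x := by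
        intro j; exact (Finset.mul_sum _ _ _).symm
      rw [Finset.sum_congr rfl (fun j _ => inner j)]
      rw [Finset.sum_eq_single i]
      · rw [sum_e_sq i]; ring
      · intro j _ hji
        rw [orth (Ne.symm hji)]; ring
      · intro h; exact absurd (Finset.mem_univ i) h
    rw [Finset.sum_congr rfl (fun i _ => this i), ← Finset.mul_sum]
  have hgs : ∑ x, g x ^ 2 ≤ (2:ℝ) ^ n := by
    calc ∑ x, g x ^ 2 ≤ ∑ _x : Fin n → Bool, (1:ℝ) :=
          Finset.sum_le_sum (fun x _ => hg x)
      _ = 2 ^ n := by rw [Finset.sum_const, nsmul_eq_mul, mul_one, ← card_cube n,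
            Finset.card_univ]
  have hT : (0:ℝ) ≤ ∑ i, a i ^ 2 := Finset.sum_nonneg fun i _ => sq_nonneg _
  have hcs : (∑ x, g x * b x) ^ 2 ≤ (∑ x, g x ^ 2) * ∑ x, b x ^ 2 :=
    Finset.sum_mul_sq_le_sq_mul_sq _ _ _
  rw [← h1, h2] at hcs
  rcases hT.eq_or_lt with h0 | h0
  · rw [← h0]; positivity
  · have : (∑ i, a i ^ 2) * (∑ i, a i ^ 2) ≤ ((2:ℝ)^n * 2^n) * (∑ i, a i ^ 2) := by
      have h2n : (0:ℝ) ≤ (2:ℝ)^n := by positivity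
      calc (∑ i, a i ^ 2) * (∑ i, a i ^ 2) = (∑ i, a i ^ 2) ^ 2 := (pow_two _).symm
        _ ≤ (∑ x, g x ^ 2) * (2 ^ n * ∑ i, a i ^ 2) := hcs
        _ ≤ 2 ^ n * (2 ^ n * ∑ i, a i ^ 2) := by
            apply mul_le_mul_of_nonneg_right hgs (by positivity)
        _ = ((2:ℝ)^n * 2^n) * (∑ i, a i ^ 2) := by ring
    exact le_of_mul_le_mul_right this h0

private lemma hyp_bound (n : ℕ) (c : Fin n → ℝ) (d : ℝ) :
    ∑ p : (Fin n → Bool) × Fin n,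
      (if Real.sign (∑ i, c i * (if (Function.update p.1 p.2 (!(p.1 p.2))) i then (1:ℝ) else 0) + d) ≠
          Real.sign (∑ i, c i * (if p.1 i then (1:ℝ) else 0) + d) then (1:ℝ) else 0)
      ≤ 2 * Real.sqrt n * 2 ^ n := by
  set L : (Fin n → Bool) → ℝ := fun x => ∑ i, c i * (if x i then (1:ℝ) else 0) + d with hLdef
  set g : (Fin n → Bool) → ℝ := fun x => Real.sign (L x) with hgdef
  set e : Fin n → (Fin n → Bool) → ℝ := fun i x => if x i then (1:ℝ) else -1 with hedef
  set a : Fin n → ℝ := fun i => ∑ x, g x * e i x with hadef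
  -- the L-difference across coordinate i
  have hLupd : ∀ (x : Fin n → Bool) (i : Fin n) (b : Bool),
      L (Function.update x i b)
        = (∑ j ∈ univ.erase i, c j * (if x j then (1:ℝ) else 0))
          + c i * (if b then (1:ℝ) else 0) + d := by
    intro x i b
    rw [hLdef]
    simp only []
    rw [← Finset.sum_erase_add _ _ (Finset.mem_univ i)]
    congr 1
    congr 1
    · refine Finset.sum_congr rfl (fun j hj => ?_)
      rw [Function.update_of_ne (Finset.ne_of_mem_erase hj)]
    · rw [Function.update_self]
  have hL : ∀ (x : Fin n → Bool) (i : Fin n),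
      L (Function.update x i true) = L (Function.update x i false) + c i := by
    intro x i; rw [hLupd, hLupd]; simp; ring
  -- step 1: rewrite the product sum
  rw [Fintype.sum_prod_type, Finset.sum_comm]
  -- per-direction bound
  have key : ∀ i : Fin n,
      ∑ x : Fin n → Bool,
        (if Real.sign (L (Function.update x i (!(x i)))) ≠ Real.sign (L x) then (1:ℝ) else 0)
        ≤ 2 * |a i| := by
    intro i
    set t : (Fin n → Bool) → ℝ :=
      fun x => g (Function.update x i true) - g (Function.update x i false) with htdef
    have step1 : ∀ x : Fin n → Bool,
        (if Real.sign (L (Function.update x i (!(x i)))) ≠ Real.sign (L x) then (1:ℝ) else 0)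
          ≤ |t x| := by
      intro x
      have habs : |g (Function.update x i (!(x i))) - g x| = |t x| := by
        simp only [htdef]
        cases hxi : x i with
        | false =>
          have hx : Function.update x i false = x := by
            rw [← hxi]; exact Function.update_eq_self i x
          have h2 : g x = g (Function.update x i false) := by rw [hx]
          rw [Bool.not_false, h2]
        | true =>
          have hx : Function.update x i true = x := by
            rw [← hxi]; exact Function.update_eq_self i x
          have h2 : g x = g (Function.update x i true) := by rw [hx]
          rw [Bool.not_true, h2, abs_sub_comm]
      split_ifs with h
      · rw [← habs]; exact one_le_abs_sign_sub h
      · positivity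
    have step2 : ∑ x, |t x| = |∑ x, t x| := by
      rcases le_total 0 (c i) with hc | hc
      · have ht : ∀ x, 0 ≤ t x := by
          intro x; rw [htdef]
          have := sign_mono (a := L (Function.update x i false))
            (b := L (Function.update x i true)) (by rw [hL]; linarith)
          simp only [hgdef]; linarith
        rw [Finset.sum_congr rfl (fun x _ => abs_of_nonneg (ht x)),
          abs_of_nonneg (Finset.sum_nonneg fun x _ => ht x)]
      · have ht : ∀ x, t x ≤ 0 := by
          intro x; rw [htdef]
          have := sign_mono (a := L (Function.update x i true))
            (b := L (Function.update x i false)) (by rw [hL]; linarith)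
          simp only [hgdef]; linarith
        rw [Finset.sum_congr rfl (fun x _ => abs_of_nonpos (ht x)),
          abs_of_nonpos (Finset.sum_nonpos fun x _ => ht x), Finset.sum_neg_distrib]
    set s : (Fin n → Bool) → ℝ := fun x => if x i then (-1:ℝ) else 1 with hsdef
    have step3 : ∑ x, t x = 2 * a i := by
      have hts : ∀ x, t x = (g (flipP n i x) - g x) * s x := by
        intro x
        simp only [htdef, hsdef, flipP_def]
        cases hxi : x i with
        | false =>
          have hx : Function.update x i false = x := by
            rw [← hxi]; exact Function.update_eq_self i x
          rw [Bool.not_false, hx, if_neg Bool.false_ne_true]; ring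
        | true =>
          have hx : Function.update x i true = x := by
            rw [← hxi]; exact Function.update_eq_self i x
          rw [Bool.not_true, hx, if_pos rfl]; ring
      have hflip : ∑ x, g (flipP n i x) * s x = - ∑ x, g x * s x := by
        have hcomp := Equiv.sum_comp (flipP n i) (fun y => g y * s (flipP n i y))
        simp only [flipP_flipP] at hcomp
        have hsflip : ∀ y : Fin n → Bool, s (flipP n i y) = -(s y) := by
          intro y; rw [hsdef]; simp only [flipP_apply_self]
          cases y i <;> norm_num
        calc ∑ x, g (flipP n i x) * s x = ∑ y, g y * s (flipP n i y) := hcomp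
          _ = ∑ y, -(g y * s y) := by
              refine Finset.sum_congr rfl (fun y _ => ?_); rw [hsflip]; ring
          _ = - ∑ x, g x * s x := by rw [Finset.sum_neg_distrib]
      have hse : ∀ x, g x * s x = -(g x * e i x) := by
        intro x; rw [hsdef, hedef]; simp only []
        cases x i <;> norm_num
      have hgs : ∑ x, g x * s x = - a i := by
        rw [hadef]; simp only []
        rw [Finset.sum_congr rfl (fun x _ => hse x), Finset.sum_neg_distrib]
      calc ∑ x, t x = ∑ x, (g (flipP n i x) * s x - g x * s x) := by
            refine Finset.sum_congr rfl (fun x _ => ?_); rw [hts]; ring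
        _ = (∑ x, g (flipP n i x) * s x) - ∑ x, g x * s x := Finset.sum_sub_distrib _ _
        _ = 2 * a i := by rw [hflip, hgs]; ring
    calc ∑ x : Fin n → Bool,
        (if Real.sign (L (Function.update x i (!(x i)))) ≠ Real.sign (L x) then (1:ℝ) else 0)
        ≤ ∑ x, |t x| := Finset.sum_le_sum (fun x _ => step1 x)
      _ = |∑ x, t x| := step2
      _ = 2 * |a i| := by rw [step3, abs_mul]; norm_num
  -- sum over directions
  have hgsq : ∀ x, g x ^ 2 ≤ 1 := by
    intro x
    rcases sign_vals (L x) with h | h | h <;> rw [hgdef] <;> simp only [] <;> rw [h] <;> norm_num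
  have hbes : ∑ i : Fin n, a i ^ 2 ≤ (2:ℝ) ^ n * 2 ^ n := bessel g hgsq
  have hcs : (∑ i : Fin n, |a i|) ^ 2 ≤ (n : ℝ) * ∑ i : Fin n, a i ^ 2 := by
    have := sq_sum_le_card_mul_sum_sq (s := (univ : Finset (Fin n))) (f := fun i => |a i|)
    simpa [sq_abs] using this
  have habs_le : ∑ i : Fin n, |a i| ≤ Real.sqrt n * 2 ^ n := by
    have hnn : (0:ℝ) ≤ ∑ i : Fin n, |a i| := Finset.sum_nonneg fun i _ => abs_nonneg _
    have h1 : (∑ i : Fin n, |a i|) ^ 2 ≤ (n : ℝ) * ((2:ℝ)^n * 2^n) := by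
      calc (∑ i : Fin n, |a i|) ^ 2 ≤ (n : ℝ) * ∑ i : Fin n, a i ^ 2 := hcs
        _ ≤ (n : ℝ) * ((2:ℝ)^n * 2^n) := by
            apply mul_le_mul_of_nonneg_left hbes (Nat.cast_nonneg n)
    have h2 : Real.sqrt ((n : ℝ) * ((2:ℝ)^n * 2^n)) = Real.sqrt n * 2 ^ n := by
      rw [Real.sqrt_mul (Nat.cast_nonneg n), Real.sqrt_mul_self (by positivity)]
    calc ∑ i : Fin n, |a i| = Real.sqrt ((∑ i : Fin n, |a i|) ^ 2) := by
          rw [Real.sqrt_sq hnn]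
      _ ≤ Real.sqrt ((n : ℝ) * ((2:ℝ)^n * 2^n)) := Real.sqrt_le_sqrt h1
      _ = Real.sqrt n * 2 ^ n := h2
  calc ∑ i : Fin n, ∑ x : Fin n → Bool,
      (if Real.sign (L (Function.update x i (!(x i)))) ≠ Real.sign (L x) then (1:ℝ) else 0)
      ≤ ∑ i : Fin n, 2 * |a i| := Finset.sum_le_sum (fun i _ => key i)
    _ = 2 * ∑ i : Fin n, |a i| := by rw [Finset.mul_sum]
    _ ≤ 2 * (Real.sqrt n * 2 ^ n) := by linarith
    _ = 2 * Real.sqrt n * 2 ^ n := by ring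

theorem avgSens_of_sign_determined :
    ∃ C : ℝ, ∀ (n k : ℕ) (f : (Fin n → Bool) → Bool)
      (c : Fin k → Fin n → ℝ) (d : Fin k → ℝ) (G : (Fin k → ℝ) → Bool),
      (∀ x : Fin n → Bool,
        f x = G fun j => Real.sign (∑ i : Fin n, c j i * (if x i then 1 else 0) + d j)) →
      avgSens n f ≤ C * k * Real.sqrt n := by
  refine ⟨2, ?_⟩
  intro n k f c d G hG
  classical
  rw [avgSens, div_le_iff₀ (by positivity : (0:ℝ) < 2 ^ n)]
  have hsens : (∑ x : Fin n → Bool, (sens n f x : ℝ))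
      = ∑ p : (Fin n → Bool) × Fin n,
          (if f (Function.update p.1 p.2 (!(p.1 p.2))) ≠ f p.1 then (1:ℝ) else 0) := by
    rw [Fintype.sum_prod_type]
    refine Finset.sum_congr rfl (fun x _ => ?_)
    rw [sens, Finset.card_filter]
    push_cast
    rfl
  have hpoint : ∀ p : (Fin n → Bool) × Fin n,
      (if f (Function.update p.1 p.2 (!(p.1 p.2))) ≠ f p.1 then (1:ℝ) else 0)
        ≤ ∑ j : Fin k,
          (if Real.sign (∑ i, c j i * (if (Function.update p.1 p.2 (!(p.1 p.2))) i then (1:ℝ) else 0) + d j) ≠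
              Real.sign (∑ i, c j i * (if p.1 i then (1:ℝ) else 0) + d j) then (1:ℝ) else 0) := by
    intro p
    split_ifs with h
    · rw [hG p.1, hG (Function.update p.1 p.2 (!(p.1 p.2)))] at h
      have hne := Function.ne_iff.mp (fun hv => h (congrArg G hv))
      obtain ⟨j, hj⟩ := hne
      have h1 : (if Real.sign (∑ i, c j i * (if (Function.update p.1 p.2 (!(p.1 p.2))) i then (1:ℝ) else 0) + d j) ≠
              Real.sign (∑ i, c j i * (if p.1 i then (1:ℝ) else 0) + d j) then (1:ℝ) else 0) = 1 :=
        if_pos hj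
      calc (1:ℝ) = _ := h1.symm
        _ ≤ _ := Finset.single_le_sum (f := fun j => (if Real.sign (∑ i, c j i * (if (Function.update p.1 p.2 (!(p.1 p.2))) i then (1:ℝ) else 0) + d j) ≠
              Real.sign (∑ i, c j i * (if p.1 i then (1:ℝ) else 0) + d j) then (1:ℝ) else 0))
            (fun j _ => by positivity) (Finset.mem_univ j)
    · positivity
  calc ∑ x : Fin n → Bool, (sens n f x : ℝ)
      ≤ ∑ p : (Fin n → Bool) × Fin n, ∑ j : Fin k,
          (if Real.sign (∑ i, c j i * (if (Function.update p.1 p.2 (!(p.1 p.2))) i then (1:ℝ) else 0) + d j) ≠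
              Real.sign (∑ i, c j i * (if p.1 i then (1:ℝ) else 0) + d j) then (1:ℝ) else 0) := by
        rw [hsens]; exact Finset.sum_le_sum (fun p _ => hpoint p)
    _ = ∑ j : Fin k, ∑ p : (Fin n → Bool) × Fin n,
          (if Real.sign (∑ i, c j i * (if (Function.update p.1 p.2 (!(p.1 p.2))) i then (1:ℝ) else 0) + d j) ≠
              Real.sign (∑ i, c j i * (if p.1 i then (1:ℝ) else 0) + d j) then (1:ℝ) else 0) :=
        Finset.sum_comm
    _ ≤ ∑ _j : Fin k, 2 * Real.sqrt n * 2 ^ n :=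
        Finset.sum_le_sum (fun j _ => hyp_bound n (c j) (d j))
    _ = k * (2 * Real.sqrt n * 2 ^ n) := by
        rw [Finset.sum_const, nsmul_eq_mul, Finset.card_univ, Fintype.card_fin]
    _ = 2 * k * Real.sqrt n * 2 ^ n := by ring
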